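/- arXiv:0801.2724 — 2 statements merged into one kernel-verified Lean document; each statement's English description precedes it below -/
import Mathlib

section
/- (Weyl's theorem / Schur–Weyl duality, commutant form, one direction.) For every N ≥ 1, a ℂ-linear endomorphism T of (ℂ²)^{⊗N} commutes with all permutation operators P_π, π ∈ S_N, if and only if T lies in the ℂ-linear span of {g^{⊗N} : g ∈ GL₂(ℂ)}. -/
noncomputable section

/-- `(ℂ²)^{⊗N}` realized as functions `(Fin N → Fin 2) → ℂ`; operators on it are matrices
indexed by `Fin N → Fin 2`. -/
abbrev TensorOps (N : ℕ) := Matrix (Fin N → Fin 2) (Fin N → Fin 2) ℂ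

/-- The `N`-fold Kronecker power `g^{⊗N}` of a `2 × 2` matrix `g`, acting on `(ℂ²)^{⊗N}`. -/
def kron (N : ℕ) (g : Matrix (Fin 2) (Fin 2) ℂ) : TensorOps N :=
  Matrix.of fun t s => ∏ j : Fin N, g (t j) (s j)

/-- The permutation operator `P_π` on `(ℂ²)^{⊗N}`, permuting the tensor factors:
`P_π (v_1 ⊗ ⋯ ⊗ v_N) = v_{π⁻¹(1)} ⊗ ⋯ ⊗ v_{π⁻¹(N)}`. -/
def permOp (N : ℕ) (π : Equiv.Perm (Fin N)) : TensorOps N :=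
  Matrix.of fun t s => if s = t ∘ π then 1 else 0

lemma mul_permOp_apply (N : ℕ) (M : TensorOps N) (π : Equiv.Perm (Fin N))
    (t s : Fin N → Fin 2) : (M * permOp N π) t s = M t (s ∘ ⇑π⁻¹) := by
  simp only [Matrix.mul_apply, permOp, Matrix.of_apply]
  rw [Finset.sum_eq_single (s ∘ ⇑π⁻¹)]
  · rw [if_pos, mul_one]
    funext j
    simp
  · intro u _ hu
    rw [if_neg, mul_zero]
    intro h
    apply hu
    funext j
    have h2 := congrFun h (π⁻¹ j)
    have h3 : s (π⁻¹ j) = u j := by simpa using h2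
    exact h3.symm
  · simp

lemma permOp_mul_apply (N : ℕ) (M : TensorOps N) (π : Equiv.Perm (Fin N))
    (t s : Fin N → Fin 2) : (permOp N π * M) t s = M (t ∘ ⇑π) s := by
  simp only [Matrix.mul_apply, permOp, Matrix.of_apply]
  rw [Finset.sum_eq_single (t ∘ ⇑π)]
  · rw [if_pos rfl, one_mul]
  · intro u _ hu
    rw [if_neg hu, zero_mul]
  · simp

lemma kron_comm (N : ℕ) (g : Matrix (Fin 2) (Fin 2) ℂ) (π : Equiv.Perm (Fin N)) :
    kron N g * permOp N π = permOp N π * kron N g := by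
  ext t s
  rw [mul_permOp_apply, permOp_mul_apply]
  show ∏ j : Fin N, g (t j) (s (π⁻¹ j)) = ∏ j : Fin N, g (t (π j)) (s j)
  rw [← Equiv.prod_comp π (fun j => g (t j) (s (π⁻¹ j)))]
  simp

lemma invariant_of_comm (N : ℕ) (T : TensorOps N)
    (h : ∀ π : Equiv.Perm (Fin N), T * permOp N π = permOp N π * T)
    (π : Equiv.Perm (Fin N)) (t s : Fin N → Fin 2) :
    T (t ∘ ⇑π) (s ∘ ⇑π) = T t s := by
  have h1 := congrFun (congrFun (h π) t) (s ∘ ⇑π)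
  rw [mul_permOp_apply, permOp_mul_apply] at h1
  have h2 : (s ∘ ⇑π) ∘ ⇑π⁻¹ = s := by funext j; simp
  rw [h2] at h1
  exact h1.symm

open MvPolynomial in
lemma prod_X_eq_monomial' {σ : Type*} {R : Type*} [CommSemiring R] {n : ℕ}
    (f : Fin n → σ) :
    (∏ j : Fin n, (X (f j) : MvPolynomial σ R)) =
      monomial (∑ j : Fin n, Finsupp.single (f j) 1) 1 := by
  induction (Finset.univ : Finset (Fin n)) using Finset.cons_induction with
  | empty => simp [monomial_zero']
  | cons a s ha ih =>
    rw [Finset.prod_cons, Finset.sum_cons, ih, X, monomial_mul, one_mul]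

/-- The tuple of pairs associated to a pair of tuples. -/
def fp {N : ℕ} (p : (Fin N → Fin 2) × (Fin N → Fin 2)) : Fin N → Fin 2 × Fin 2 :=
  fun j => (p.1 j, p.2 j)

/-- The multiplicity (exponent) vector of a pair of tuples. -/
def μp {N : ℕ} (p : (Fin N → Fin 2) × (Fin N → Fin 2)) : (Fin 2 × Fin 2) →₀ ℕ :=
  ∑ j : Fin N, Finsupp.single (fp p j) 1

lemma μp_eq_perm {N : ℕ} (p q : (Fin N → Fin 2) × (Fin N → Fin 2)) (h : μp p = μp q) :
    ∃ π : Equiv.Perm (Fin N), p.1 = q.1 ∘ ⇑π ∧ p.2 = q.2 ∘ ⇑π := by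
  have hcard : ∀ x, Fintype.card {j : Fin N // fp p j = x} =
      Fintype.card {j : Fin N // fp q j = x} := by
    intro x
    have h1 : ∀ (r : (Fin N → Fin 2) × (Fin N → Fin 2)) (x),
        (μp r) x = Fintype.card {j : Fin N // fp r j = x} := by
      intro r x
      rw [Fintype.card_subtype, μp, Finsupp.finset_sum_apply, Finset.card_filter]
      exact Finset.sum_congr rfl fun j _ => Finsupp.single_apply
    rw [← h1, ← h1, h]
  let e : ∀ x, {j : Fin N // fp p j = x} ≃ {j : Fin N // fp q j = x} :=
    fun x => Fintype.equivOfCardEq (hcard x)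
  refine ⟨Equiv.ofFiberEquiv e, ?_, ?_⟩
  · funext j
    exact (congrArg Prod.fst (Equiv.ofFiberEquiv_map e j)).symm
  · funext j
    exact (congrArg Prod.snd (Equiv.ofFiberEquiv_map e j)).symm

open MvPolynomial in
/-- Schur–Weyl duality (commutant form, one direction): an endomorphism of `(ℂ²)^{⊗N}`
commutes with all permutation operators `P_π`, `π ∈ S_N`, iff it lies in the ℂ-linear span
of `{g^{⊗N} : g ∈ GL₂(ℂ)}`. -/
theorem schurWeyl_commutant_of_permutations (N : ℕ) (hN : 1 ≤ N) (T : TensorOps N) :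
    (∀ π : Equiv.Perm (Fin N), T * permOp N π = permOp N π * T) ↔
      T ∈ Submodule.span ℂ
        {M : TensorOps N | ∃ g : Matrix (Fin 2) (Fin 2) ℂ, IsUnit g ∧ M = kron N g} := by
  set S : Set (TensorOps N) :=
    {M : TensorOps N | ∃ g : Matrix (Fin 2) (Fin 2) ℂ, IsUnit g ∧ M = kron N g} with hS
  constructor
  · -- hard direction
    intro hcomm
    by_contra hT
    obtain ⟨φ, hφT, hφS⟩ := Submodule.exists_dual_map_eq_bot_of_notMem hT inferInstance
    have hφ0 : ∀ M ∈ Submodule.span ℂ S, φ M = 0 := by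
      intro M hM
      have : φ M ∈ (Submodule.span ℂ S).map φ := Submodule.mem_map_of_mem hM
      rwa [hφS, Submodule.mem_bot] at this
    set c : ((Fin N → Fin 2) × (Fin N → Fin 2)) → ℂ :=
      fun p => φ (Matrix.single p.1 p.2 1) with hc
    have hexp : ∀ M : TensorOps N,
        φ M = ∑ p : (Fin N → Fin 2) × (Fin N → Fin 2), M p.1 p.2 * c p := by
      intro M
      conv_lhs => rw [Matrix.matrix_eq_sum_single M]
      rw [map_sum, Fintype.sum_prod_type]
      refine Finset.sum_congr rfl fun i _ => ?_
      rw [map_sum]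
      refine Finset.sum_congr rfl fun j _ => ?_
      have h3 : Matrix.single i j (M i j) = (M i j) • Matrix.single i j 1 := by
        rw [Matrix.smul_single, smul_eq_mul, mul_one]
      rw [h3, map_smul, smul_eq_mul]
    -- the polynomial
    set P : MvPolynomial (Fin 2 × Fin 2) ℂ :=
      ∑ p : (Fin N → Fin 2) × (Fin N → Fin 2), C (c p) * ∏ j : Fin N, X (fp p j) with hP
    set D : MvPolynomial (Fin 2 × Fin 2) ℂ :=
      X (0, 0) * X (1, 1) - X (0, 1) * X (1, 0) with hD
    have hPeval : ∀ g : Matrix (Fin 2) (Fin 2) ℂ,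
        eval (fun q : Fin 2 × Fin 2 => g q.1 q.2) P = φ (kron N g) := by
      intro g
      rw [hexp, hP, map_sum]
      refine Finset.sum_congr rfl fun p _ => ?_
      rw [map_mul, eval_C, map_prod]
      simp only [eval_X]
      rw [mul_comm]
      rfl
    have hDeval : ∀ g : Matrix (Fin 2) (Fin 2) ℂ,
        eval (fun q : Fin 2 × Fin 2 => g q.1 q.2) D = g.det := by
      intro g
      rw [Matrix.det_fin_two, hD]
      simp
    have hPD : P * D = 0 := by
      apply MvPolynomial.funext
      intro v
      set g : Matrix (Fin 2) (Fin 2) ℂ := Matrix.of fun a b => v (a, b) with hg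
      have hv : v = fun q : Fin 2 × Fin 2 => g q.1 q.2 := by
        funext q
        cases q
        rfl
      rw [map_mul, map_zero, hv]
      by_cases hu : IsUnit g
      · rw [hPeval]
        rw [hφ0 (kron N g) (Submodule.subset_span ⟨g, hu, rfl⟩), zero_mul]
      · rw [hDeval]
        rw [Matrix.isUnit_iff_isUnit_det, isUnit_iff_ne_zero, not_not] at hu
        rw [hu, mul_zero]
    have hDne : D ≠ 0 := by
      intro h0
      have := congrArg (eval (fun q : Fin 2 × Fin 2 =>
        if q = ((0 : Fin 2), (0 : Fin 2)) ∨ q = (1, 1) then (1 : ℂ) else 0)) h0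
      rw [map_zero, hD] at this
      simp at this
    have hP0 : P = 0 := by
      rcases mul_eq_zero.mp hPD with h | h
      · exact h
      · exact absurd h hDne
    -- coefficient extraction
    have hcoeff : ∀ d : (Fin 2 × Fin 2) →₀ ℕ,
        (∑ p ∈ Finset.univ.filter
          (fun p : (Fin N → Fin 2) × (Fin N → Fin 2) => μp p = d), c p) = 0 := by
      intro d
      have h1 : coeff d P = 0 := by rw [hP0, coeff_zero]
      have h2 : coeff d P = ∑ p : (Fin N → Fin 2) × (Fin N → Fin 2),
          if μp p = d then c p else 0 := by
        rw [hP, coeff_sum]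
        refine Finset.sum_congr rfl fun p _ => ?_
        rw [prod_X_eq_monomial']
        show coeff d (C (c p) * monomial (μp p) 1) = _
        rw [C_mul_monomial, mul_one, coeff_monomial]
      rw [Finset.sum_filter, ← h2, h1]
    -- T constant on μp-classes
    have hconst : ∀ p q : (Fin N → Fin 2) × (Fin N → Fin 2), μp p = μp q →
        T p.1 p.2 = T q.1 q.2 := by
      intro p q h
      obtain ⟨π, h1, h2⟩ := μp_eq_perm p q h
      rw [h1, h2]
      exact invariant_of_comm N T hcomm π q.1 q.2
    -- conclude φ T = 0
    have hsum : ∑ p : (Fin N → Fin 2) × (Fin N → Fin 2), T p.1 p.2 * c p = 0 := by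
      rw [← Finset.sum_fiberwise_of_maps_to
        (g := μp) (t := Finset.univ.image μp)
        (fun p _ => Finset.mem_image_of_mem μp (Finset.mem_univ p))
        (fun p => T p.1 p.2 * c p)]
      refine Finset.sum_eq_zero fun d hd => ?_
      obtain ⟨p0, _, rfl⟩ := Finset.mem_image.mp hd
      have : ∑ p ∈ Finset.univ.filter
          (fun p : (Fin N → Fin 2) × (Fin N → Fin 2) => μp p = μp p0),
          T p.1 p.2 * c p
          = T p0.1 p0.2 * ∑ p ∈ Finset.univ.filter
            (fun p : (Fin N → Fin 2) × (Fin N → Fin 2) => μp p = μp p0), c p := by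
        rw [Finset.mul_sum]
        refine Finset.sum_congr rfl fun p hp => ?_
        rw [hconst p p0 (Finset.mem_filter.mp hp).2]
      rw [this, hcoeff, mul_zero]
    rw [← hexp] at hsum
    exact hφT hsum
  · -- easy direction
    intro hT π
    induction hT using Submodule.span_induction with
    | mem M hM =>
      obtain ⟨g, _, rfl⟩ := hM
      exact kron_comm N g π
    | zero => simp
    | add x y _ _ hx hy => rw [add_mul, mul_add, hx, hy]
    | smul a x _ hx => rw [Matrix.smul_mul, Matrix.mul_smul, hx]
end
end

section
/- (Weyl's theorem / Schur–Weyl duality, commutant form, other direction.) For every N ≥ 1, a ℂ-linear endomorphism T of (ℂ²)^{⊗N} commutes with g^{⊗N} for all g ∈ GL₂(ℂ) if and only if T lies in the ℂ-linear span of the permutation operators {P_π : π ∈ S_N}. -/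
open scoped Matrix
open Polynomial

noncomputable section

set_option linter.unusedSectionVars false
set_option linter.unusedTactic false

variable {N : ℕ}

variable {N : ℕ}

lemma permOp_apply (π : Equiv.Perm (Fin N)) (t s : Fin N → Fin 2) :
    permOp N π t s = if s = t ∘ π then 1 else 0 := rfl

lemma kron_apply (g : Matrix (Fin 2) (Fin 2) ℂ) (t s : Fin N → Fin 2) :
    kron N g t s = ∏ j : Fin N, g (t j) (s j) := rfl

lemma permOp_mul_permOp (π σ : Equiv.Perm (Fin N)) :
    permOp N π * permOp N σ = permOp N (π * σ) := by
  ext t s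
  rw [Matrix.mul_apply]
  rw [Finset.sum_eq_single (t ∘ π)]
  · simp [permOp, Function.comp_assoc]
    rfl
  · intro b _ hb
    simp [permOp_apply, hb]
  · simp

lemma permOp_one : permOp N 1 = 1 := by
  ext t s
  simp [permOp, Matrix.one_apply, eq_comm]

lemma conjTranspose_permOp (π : Equiv.Perm (Fin N)) :
    (permOp N π)ᴴ = permOp N π⁻¹ := by
  ext t s
  simp only [Matrix.conjTranspose_apply, permOp_apply]
  have h : t = s ∘ ⇑π ↔ s = t ∘ ⇑π⁻¹ := by
    constructor
    · intro h; funext j; simp [h]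
    · intro h; funext j; simp [h]
  by_cases hc : t = s ∘ ⇑π
  · rw [if_pos hc, if_pos (h.mp hc)]; simp
  · rw [if_neg hc, if_neg (fun hh => hc (h.mpr hh))]; simp

lemma permOp_mul_kron (π : Equiv.Perm (Fin N)) (g : Matrix (Fin 2) (Fin 2) ℂ) :
    permOp N π * kron N g = kron N g * permOp N π := by
  ext t s
  rw [Matrix.mul_apply, Matrix.mul_apply]
  rw [Finset.sum_eq_single (t ∘ π), Finset.sum_eq_single (s ∘ ⇑π⁻¹)]
  · have h1 : s = (s ∘ ⇑π⁻¹) ∘ ⇑π := by funext j; simp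
    rw [permOp_apply, permOp_apply, if_pos h1, if_pos rfl, mul_one, one_mul]
    rw [kron_apply, kron_apply]
    calc ∏ j : Fin N, g ((t ∘ ⇑π) j) (s j)
        = ∏ j : Fin N, g (t (π j)) (s (π⁻¹ (π j))) :=
          Finset.prod_congr rfl (by intro j _; simp)
      _ = ∏ j : Fin N, g (t j) (s (π⁻¹ j)) := Equiv.prod_comp π (fun i => g (t i) (s (π⁻¹ i)))
      _ = ∏ j : Fin N, g (t j) ((s ∘ ⇑π⁻¹) j) := rfl
  · intro b _ hb
    have : ¬ s = b ∘ π := by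
      intro h; apply hb; funext j; simp [h]
    simp [permOp_apply, this]
  · simp
  · intro b _ hb
    simp [permOp_apply, hb]
  · simp


/-- for all but finitely many ε, g + ε•1 is invertible -/
lemma finite_nonunit (g : Matrix (Fin 2) (Fin 2) ℂ) :
    {ε : ℂ | ¬ IsUnit (g + ε • 1)}.Finite := by
  set q : Polynomial ℂ :=
    X ^ 2 + C (g 0 0 + g 1 1) * X + C (g 0 0 * g 1 1 - g 0 1 * g 1 0) with hq
  have hq0 : q ≠ 0 := by
    intro h
    have : q.coeff 2 = 1 := by
      simp [hq, coeff_add, coeff_X_pow, coeff_C]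
    rw [h] at this
    simp at this
  have heval : ∀ ε : ℂ, (g + ε • 1).det = q.eval ε := by
    intro ε
    rw [Matrix.det_fin_two]
    simp [hq, Matrix.one_apply]
    ring
  apply (q.finite_setOf_isRoot hq0).subset
  intro ε hε
  simp only [Set.mem_setOf_eq] at hε ⊢
  rw [IsRoot, ← heval]
  by_contra hdet
  exact hε ((Matrix.isUnit_iff_isUnit_det _).2 (isUnit_iff_ne_zero.2 hdet))

/-- entrywise polynomial for kron (g + ε•1) -/
def kq (g : Matrix (Fin 2) (Fin 2) ℂ) (a b : Fin N → Fin 2) : Polynomial ℂ :=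
  ∏ j : Fin N, (C (g (a j) (b j)) + if a j = b j then X else 0)

lemma kq_eval (g : Matrix (Fin 2) (Fin 2) ℂ) (a b : Fin N → Fin 2) (ε : ℂ) :
    (kq g a b).eval ε = kron N (g + ε • 1) a b := by
  rw [kq, kron_apply, eval_prod]
  apply Finset.prod_congr rfl
  intro j _
  simp [Matrix.one_apply, apply_ite (eval ε)]

lemma commute_kron_of_commute_unit (T : TensorOps N)
    (h : ∀ g : Matrix (Fin 2) (Fin 2) ℂ, IsUnit g → T * kron N g = kron N g * T)
    (g : Matrix (Fin 2) (Fin 2) ℂ) : T * kron N g = kron N g * T := by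
  have key : ∀ t s : Fin N → Fin 2, (T * kron N g) t s = (kron N g * T) t s := by
    intro t s
    set p : Polynomial ℂ :=
      (∑ u : Fin N → Fin 2, C (T t u) * kq g u s)
        - ∑ u : Fin N → Fin 2, kq g t u * C (T u s) with hp
    have hpe : ∀ ε : ℂ, p.eval ε
        = (T * kron N (g + ε • 1)) t s - (kron N (g + ε • 1) * T) t s := by
      intro ε
      rw [hp, Matrix.mul_apply, Matrix.mul_apply]
      simp [eval_finset_sum, kq_eval]
    have hroots : {ε : ℂ | ¬ IsUnit (g + ε • 1)}ᶜ ⊆ {ε | p.IsRoot ε} := by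
      intro ε hε
      simp only [Set.mem_compl_iff, Set.mem_setOf_eq, not_not] at hε
      have := h _ hε
      simp only [Set.mem_setOf_eq, IsRoot, hpe ε, this, sub_self]
    have hp0 : p = 0 := by
      apply eq_zero_of_infinite_isRoot
      exact Set.Infinite.mono hroots ((finite_nonunit g).infinite_compl)
    have := hpe 0
    rw [hp0] at this
    simp at this
    exact sub_eq_zero.mp this.symm
  ext t s
  exact key t s


/-- elementary tensor operator -/
def Eu (N : ℕ) (u : Fin N → Fin 2 × Fin 2) : TensorOps N :=
  Matrix.of fun t s => ∏ j : Fin N, (if (t j, s j) = u j then (1:ℂ) else 0)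

lemma Eu_apply (u : Fin N → Fin 2 × Fin 2) (t s : Fin N → Fin 2) :
    Eu N u t s = ∏ j : Fin N, (if (t j, s j) = u j then (1:ℂ) else 0) := rfl

lemma Eu_apply' (u : Fin N → Fin 2 × Fin 2) (t s : Fin N → Fin 2) :
    Eu N u t s = if (fun j => (t j, s j)) = u then 1 else 0 := by
  rw [Eu_apply, Finset.prod_boole]
  congr 1
  simp only [eq_iff_iff]
  constructor
  · intro h; funext j; exact h j (Finset.mem_univ j)
  · intro h j _; exact congrFun h j

/-- expansion of a matrix in the elementary tensor operators -/
lemma matrix_expand (X : TensorOps N) :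
    X = ∑ u : Fin N → Fin 2 × Fin 2,
      X (fun j => (u j).1) (fun j => (u j).2) • Eu N u := by
  ext t s
  rw [Matrix.sum_apply]
  rw [Finset.sum_eq_single (fun j => (t j, s j))]
  · simp [Eu_apply']
  · intro u _ hu
    simp only [Matrix.smul_apply, Eu_apply', smul_eq_mul]
    rw [if_neg (fun h => hu h.symm), mul_zero]
  · simp

/-- inclusion-exclusion coefficient -/
lemma alt_sum_superset (R : Finset (Fin N)) :
    ∑ S : Finset (Fin N), (if R ⊆ S then ((-1:ℂ))^(N - S.card) else 0)
      = if R = Finset.univ then 1 else 0 := by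
  classical
  rw [← Finset.sum_filter]
  have key : ∑ S ∈ Finset.univ.filter (fun S => R ⊆ S), ((-1:ℂ))^(N - S.card)
      = ∑ T ∈ Rᶜ.powerset, ((-1:ℂ))^(Rᶜ.card - T.card) := by
    apply Finset.sum_nbij' (fun S => S \ R) (fun T => T ∪ R)
    · intro S hS
      simp only [Finset.mem_powerset]
      intro x hx
      rw [Finset.mem_sdiff] at hx
      simp [hx.2]
    · intro T hT
      simp only [Finset.mem_filter, Finset.mem_univ, true_and]
      exact Finset.subset_union_right
    · intro S hS
      simp only [Finset.mem_filter, Finset.mem_univ, true_and] at hS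
      exact Finset.sdiff_union_of_subset hS
    · intro T hT
      simp only [Finset.mem_powerset] at hT
      apply Finset.union_sdiff_cancel_right
      exact (disjoint_compl_left).mono_left hT
    · intro S hS
      simp only [Finset.mem_filter, Finset.mem_univ, true_and] at hS
      congr 1
      have h1 : (S \ R).card = S.card - R.card := Finset.card_sdiff_of_subset hS
      have h2 : Rᶜ.card = N - R.card := by
        rw [Finset.card_compl, Fintype.card_fin]
      have h3 : R.card ≤ S.card := Finset.card_le_card hS
      have h4 : S.card ≤ N := by
        simpa using Finset.card_le_univ S
      omega
  rw [key]
  have sign : ∀ T ∈ Rᶜ.powerset,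
      ((-1:ℂ))^(Rᶜ.card - T.card) = (-1)^Rᶜ.card * (-1)^T.card := by
    intro T hT
    have hT' : T.card ≤ Rᶜ.card := Finset.card_le_card (Finset.mem_powerset.1 hT)
    rw [← pow_add, show Rᶜ.card + T.card = (Rᶜ.card - T.card) + 2 * T.card by omega,
      pow_add, pow_mul]
    simp
  rw [Finset.sum_congr rfl sign, ← Finset.mul_sum]
  have cast0 : ∑ T ∈ Rᶜ.powerset, ((-1:ℂ))^T.card
      = if Rᶜ = ∅ then 1 else 0 := by
    have h := Finset.sum_powerset_neg_one_pow_card (α := Fin N) (x := Rᶜ)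
    have := congrArg (Int.cast : ℤ → ℂ) h
    push_cast at this
    exact this
  rw [cast0]
  by_cases hR : R = Finset.univ
  · rw [if_pos hR, if_pos (by simp [hR]), hR]
    simp
  · rw [if_neg hR, if_neg (by simpa [Finset.compl_eq_empty_iff] using hR), mul_zero]

def M2 (p : Fin 2 × Fin 2) : Matrix (Fin 2) (Fin 2) ℂ :=
  Matrix.of fun a b => if (a, b) = p then 1 else 0

lemma polarization (u : Fin N → Fin 2 × Fin 2) :
    ∑ S : Finset (Fin N), ((-1:ℂ))^(N - S.card) • kron N (∑ i ∈ S, M2 (u i))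
      = ∑ π : Equiv.Perm (Fin N), Eu N (u ∘ ⇑π) := by
  classical
  ext t s
  rw [Matrix.sum_apply, Matrix.sum_apply]
  have h1 : ∀ S : Finset (Fin N), kron N (∑ i ∈ S, M2 (u i)) t s
      = ∑ f ∈ Fintype.piFinset (fun _ : Fin N => S),
          ∏ j : Fin N, (if (t j, s j) = u (f j) then (1:ℂ) else 0) := by
    intro S
    rw [kron_apply]
    have he : ∀ j : Fin N, (∑ i ∈ S, M2 (u i)) (t j) (s j)
        = ∑ i ∈ S, (if (t j, s j) = u i then (1:ℂ) else 0) := by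
      intro j
      rw [Matrix.sum_apply]
      exact Finset.sum_congr rfl fun i _ => rfl
    rw [Finset.prod_congr rfl (fun j _ => he j), Finset.prod_univ_sum]
  have h2 : ∀ S : Finset (Fin N),
      (∑ f ∈ Fintype.piFinset (fun _ : Fin N => S),
          ∏ j : Fin N, (if (t j, s j) = u (f j) then (1:ℂ) else 0))
      = ∑ f : Fin N → Fin N, (if ∀ j, f j ∈ S then
          ∏ j : Fin N, (if (t j, s j) = u (f j) then (1:ℂ) else 0) else 0) := by
    intro S
    rw [← Finset.sum_filter]
    apply Finset.sum_congr _ (fun _ _ => rfl)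
    ext f
    simp [Fintype.mem_piFinset]
  calc ∑ S : Finset (Fin N), ((-1:ℂ))^(N - S.card) • kron N (∑ i ∈ S, M2 (u i)) t s
      = ∑ S : Finset (Fin N), ∑ f : Fin N → Fin N,
          (if ∀ j, f j ∈ S then ((-1:ℂ))^(N - S.card) else 0) *
            ∏ j : Fin N, (if (t j, s j) = u (f j) then (1:ℂ) else 0) := by
        apply Finset.sum_congr rfl
        intro S _
        rw [h1 S, h2 S, smul_eq_mul, Finset.mul_sum]
        apply Finset.sum_congr rfl
        intro f _
        simp only [mul_ite, mul_zero, ite_mul, zero_mul]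
    _ = ∑ f : Fin N → Fin N,
          (if Finset.image f Finset.univ = Finset.univ then (1:ℂ) else 0) *
            ∏ j : Fin N, (if (t j, s j) = u (f j) then (1:ℂ) else 0) := by
        rw [Finset.sum_comm]
        apply Finset.sum_congr rfl
        intro f _
        rw [← Finset.sum_mul]
        congr 1
        rw [← alt_sum_superset (Finset.image f Finset.univ)]
        apply Finset.sum_congr rfl
        intro S _
        congr 1
        simp [Finset.image_subset_iff]
    _ = ∑ f ∈ Finset.univ.filter
          (fun f : Fin N → Fin N => Finset.image f Finset.univ = Finset.univ),
          ∏ j : Fin N, (if (t j, s j) = u (f j) then (1:ℂ) else 0) := by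
        rw [Finset.sum_filter]
        apply Finset.sum_congr rfl
        intro f _
        rw [ite_mul, one_mul, zero_mul]
    _ = ∑ π : Equiv.Perm (Fin N), Eu N (u ∘ ⇑π) t s := by
        symm
        apply Finset.sum_bij (fun (π : Equiv.Perm (Fin N)) _ => ⇑π)
        · intro π _
          simp only [Finset.mem_filter, Finset.mem_univ, true_and]
          exact Finset.image_univ_of_surjective π.surjective
        · intro π _ σ _ h
          exact Equiv.coe_fn_injective h
        · intro f hf
          simp only [Finset.mem_filter, Finset.mem_univ, true_and] at hf
          have hsurj : Function.Surjective f := by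
            intro y
            have : y ∈ Finset.image f Finset.univ := by rw [hf]; simp
            rcases Finset.mem_image.mp this with ⟨x, _, hx⟩
            exact ⟨x, hx⟩
          have hbij : Function.Bijective f := Finite.surjective_iff_bijective.mp hsurj
          exact ⟨Equiv.ofBijective f hbij, Finset.mem_univ _, rfl⟩
        · intro π _
          rfl
  done

lemma sym_sum_mem (u : Fin N → Fin 2 × Fin 2) :
    ∑ π : Equiv.Perm (Fin N), Eu N (u ∘ ⇑π)
      ∈ Submodule.span ℂ (Set.range (kron N)) := by
  rw [← polarization]
  apply Submodule.sum_mem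
  intro S _
  exact Submodule.smul_mem _ _ (Submodule.subset_span ⟨_, rfl⟩)

def pcomp (π : Equiv.Perm (Fin N)) :
    (Fin N → Fin 2 × Fin 2) ≃ (Fin N → Fin 2 × Fin 2) where
  toFun u := u ∘ ⇑π
  invFun u := u ∘ ⇑π⁻¹
  left_inv u := by funext j; simp
  right_inv u := by funext j; simp

lemma mem_span_kron_of_symm (X : TensorOps N)
    (hsym : ∀ (π : Equiv.Perm (Fin N)) (t s : Fin N → Fin 2),
      X (t ∘ ⇑π) (s ∘ ⇑π) = X t s) :
    X ∈ Submodule.span ℂ (Set.range (kron N)) := by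
  set c : (Fin N → Fin 2 × Fin 2) → ℂ :=
    fun u => X (fun j => (u j).1) (fun j => (u j).2) with hc
  have hX : ∀ π : Equiv.Perm (Fin N), X = ∑ u, c u • Eu N (u ∘ ⇑π) := by
    intro π
    calc X = ∑ u, c u • Eu N u := matrix_expand X
      _ = ∑ u, c (pcomp π u) • Eu N (pcomp π u) :=
          (Equiv.sum_comp (pcomp π) (fun u => c u • Eu N u)).symm
      _ = ∑ u, c u • Eu N (u ∘ ⇑π) := by
          apply Finset.sum_congr rfl
          intro u _
          congr 1
          exact hsym π (fun j => (u j).1) (fun j => (u j).2)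
  have htot : (Nat.factorial N : ℂ) • X
      = ∑ u, c u • ∑ π : Equiv.Perm (Fin N), Eu N (u ∘ ⇑π) := by
    calc (Nat.factorial N : ℂ) • X = ∑ _π : Equiv.Perm (Fin N), X := by
          rw [Finset.sum_const, Finset.card_univ, Fintype.card_perm, Fintype.card_fin,
            Nat.cast_smul_eq_nsmul]
      _ = ∑ π : Equiv.Perm (Fin N), ∑ u, c u • Eu N (u ∘ ⇑π) :=
          Finset.sum_congr rfl (fun π _ => hX π)
      _ = ∑ u, ∑ π : Equiv.Perm (Fin N), c u • Eu N (u ∘ ⇑π) := Finset.sum_comm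
      _ = ∑ u, c u • ∑ π : Equiv.Perm (Fin N), Eu N (u ∘ ⇑π) := by
          simp [Finset.smul_sum]
  have hmem : (Nat.factorial N : ℂ) • X ∈ Submodule.span ℂ (Set.range (kron N)) := by
    rw [htot]
    exact Submodule.sum_mem _ (fun u _ => Submodule.smul_mem _ _ (sym_sum_mem u))
  have hfac : (Nat.factorial N : ℂ) ≠ 0 :=
    Nat.cast_ne_zero.2 (Nat.factorial_ne_zero N)
  have h2 := Submodule.smul_mem _ ((Nat.factorial N : ℂ))⁻¹ hmem
  rwa [inv_smul_smul₀ hfac] at h2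

end

noncomputable section DCsec

variable {I : Type*} [Fintype I] [DecidableEq I]

/-- matrices as Euclidean space -/
def matE : Matrix I I ℂ ≃ₗ[ℂ] EuclideanSpace ℂ (I × I) where
  toFun M := WithLp.toLp 2 (fun p => M p.1 p.2)
  invFun v := Matrix.of fun i j => v (i, j)
  map_add' := by intros; rfl
  map_smul' := by intros; rfl
  left_inv := by intro M; rfl
  right_inv := by intro v; rfl

lemma matE_apply (M : Matrix I I ℂ) (p : I × I) : matE M p = M p.1 p.2 := rfl

lemma matE_symm_apply (v : EuclideanSpace ℂ (I × I)) (i j : I) :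
    matE.symm v i j = v (i, j) := rfl

lemma inner_matE (x y : Matrix I I ℂ) :
    (inner ℂ (matE x) (matE y) : ℂ)
      = ∑ p : I × I, (starRingEnd ℂ) (x p.1 p.2) * y p.1 p.2 := by
  rw [PiLp.inner_apply]
  apply Finset.sum_congr rfl
  intro p _
  rw [RCLike.inner_apply]
  exact mul_comm _ _

/-- adjoint of left multiplication -/
lemma inner_mul_left (a x y : Matrix I I ℂ) :
    (inner ℂ (matE (a * x)) (matE y) : ℂ) = inner ℂ (matE x) (matE (aᴴ * y)) := by
  rw [inner_matE, inner_matE]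
  have L : ∑ p : I × I, (starRingEnd ℂ) ((a * x) p.1 p.2) * y p.1 p.2
      = ∑ p : I × I, ∑ k : I,
          (starRingEnd ℂ) (a p.1 k) * ((starRingEnd ℂ) (x k p.2) * y p.1 p.2) := by
    apply Finset.sum_congr rfl
    intro p _
    rw [Matrix.mul_apply, map_sum, Finset.sum_mul]
    apply Finset.sum_congr rfl
    intro k _
    rw [map_mul, mul_assoc]
  have R : ∑ p : I × I, (starRingEnd ℂ) (x p.1 p.2) * (aᴴ * y) p.1 p.2
      = ∑ p : I × I, ∑ k : I,
          (starRingEnd ℂ) (a k p.1) * ((starRingEnd ℂ) (x p.1 p.2) * y k p.2) := by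
    apply Finset.sum_congr rfl
    intro p _
    rw [Matrix.mul_apply, Finset.mul_sum]
    apply Finset.sum_congr rfl
    intro k _
    simp only [Matrix.conjTranspose_apply, RCLike.star_def]
    ring
  rw [L, R]
  have key : ∀ f : I → I → I → ℂ,
      (∑ p : I × I, ∑ k : I, f p.1 k p.2) = ∑ p : I × I, ∑ k : I, f k p.1 p.2 := by
    intro f
    rw [Fintype.sum_prod_type, Fintype.sum_prod_type]
    calc ∑ i : I, ∑ j : I, ∑ k : I, f i k j
        = ∑ i : I, ∑ k : I, ∑ j : I, f i k j :=
          Finset.sum_congr rfl (fun i _ => Finset.sum_comm)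
      _ = ∑ k : I, ∑ i : I, ∑ j : I, f i k j := Finset.sum_comm
      _ = ∑ k : I, ∑ j : I, ∑ i : I, f i k j :=
          Finset.sum_congr rfl (fun k _ => Finset.sum_comm)
  exact key (fun i k j => (starRingEnd ℂ) (a i k) * ((starRingEnd ℂ) (x k j) * y i j))

section DC

variable (A : Submodule ℂ (Matrix I I ℂ))
  (h1A : (1 : Matrix I I ℂ) ∈ A)
  (hmul : ∀ a b, a ∈ A → b ∈ A → a * b ∈ A)
  (hstar : ∀ a ∈ A, aᴴ ∈ A)

-- the image of A in Euclidean space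
local notation "U" => Submodule.map (matE (I := I) : Matrix I I ℂ →ₗ[ℂ] EuclideanSpace ℂ (I × I)) A

include h1A hmul hstar

lemma proj_comm (a : Matrix I I ℂ) (ha : a ∈ A) (x : EuclideanSpace ℂ (I × I)) :
    (Submodule.orthogonalProjection U (matE (a * matE.symm x)) : EuclideanSpace ℂ (I × I))
      = matE (a * matE.symm (Submodule.orthogonalProjection U x)) := by
  set u : EuclideanSpace ℂ (I × I) := (Submodule.orthogonalProjection U x : EuclideanSpace ℂ (I × I)) with hu
  have hux : u ∈ U := (Submodule.orthogonalProjection U x).2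
  have hw : x - u ∈ (U)ᗮ := Submodule.sub_starProjection_mem_orthogonal x
  have hdecomp : a * matE.symm x = a * matE.symm u + a * matE.symm (x - u) := by
    have hx : u + (x - u) = x := by abel
    rw [← mul_add, ← map_add, hx]
  have hmemU : matE (a * matE.symm u) ∈ U := by
    rcases hux with ⟨m, hm, hmu⟩
    have hmu' : matE.symm u = m := by
      rw [← hmu]; exact matE.symm_apply_apply m
    refine ⟨a * m, hmul a m ha hm, ?_⟩
    rw [hmu']
    rfl
  have hmemO : matE (a * matE.symm (x - u)) ∈ (U)ᗮ := by
    rw [Submodule.mem_orthogonal]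
    intro v hv
    rcases hv with ⟨m, hm, hmv⟩
    have hv' : v = matE m := hmv.symm
    rw [hv']
    have h2 := inner_mul_left (I := I) aᴴ m (matE.symm (x - u))
    rw [Matrix.conjTranspose_conjTranspose, matE.apply_symm_apply] at h2
    rw [← h2]
    have hin : matE (aᴴ * m) ∈ U := ⟨aᴴ * m, hmul _ _ (hstar a ha) hm, rfl⟩
    exact (Submodule.mem_orthogonal (U) (x - u)).1 hw _ hin
  rw [hdecomp, map_add, map_add]
  have e1 : (Submodule.orthogonalProjection U (matE (a * matE.symm u)) : EuclideanSpace ℂ (I × I))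
      = matE (a * matE.symm u) := Submodule.starProjection_eq_self_iff.2 hmemU
  have e2 : Submodule.orthogonalProjection U (matE (a * matE.symm (x - u))) = 0 :=
    Submodule.orthogonalProjectionOnto_apply_of_mem_orthogonal hmemO
  rw [Submodule.coe_add, e1, e2]
  simp

def colvL (j : I) : Matrix I I ℂ →ₗ[ℂ] (I → ℂ) where
  toFun X := fun i => X i j
  map_add' := by intros; rfl
  map_smul' := by intros; rfl

def colmL (j : I) : (I → ℂ) →ₗ[ℂ] Matrix I I ℂ where
  toFun v := Matrix.of fun i j' => if j' = j then v i else 0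
  map_add' := by
    intro v w; ext i j'
    simp only [Matrix.of_apply, Matrix.add_apply, Pi.add_apply]
    split <;> simp
  map_smul' := by
    intro c v; ext i j'
    simp only [Matrix.of_apply, Matrix.smul_apply, Pi.smul_apply, RingHom.id_apply]
    split <;> simp

omit h1A hmul hstar in
lemma colv_mul (a X : Matrix I I ℂ) (j : I) :
    colvL j (a * X) = a.mulVec (colvL j X) := by
  funext i
  simp [colvL, Matrix.mul_apply, Matrix.mulVec, dotProduct]
  rfl

omit h1A hmul hstar in
lemma mul_colm (a : Matrix I I ℂ) (v : I → ℂ) (j : I) :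
    a * colmL j v = colmL j (a.mulVec v) := by
  ext i j'
  rw [Matrix.mul_apply]
  by_cases h : j' = j
  · simp [colmL, h, Matrix.mulVec, dotProduct]
  · simp [colmL, h]

omit h1A hmul hstar in
lemma colm_colv (X : Matrix I I ℂ) : ∑ j : I, colmL j (colvL j X) = X := by
  ext i j'
  rw [Matrix.sum_apply]
  simp [colmL, colvL, Finset.sum_ite_eq]
  rfl

def PsiL : Matrix I I ℂ →ₗ[ℂ] Matrix I I ℂ :=
  matE.symm.toLinearMap
    ∘ₗ ((Submodule.subtype (U)) ∘ₗ
        ((Submodule.orthogonalProjection (U)) : EuclideanSpace ℂ (I × I) →ₗ[ℂ] (U)))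
    ∘ₗ matE.toLinearMap

omit h1A hmul hstar in
lemma PsiL_apply (X : Matrix I I ℂ) :
    PsiL A X = matE.symm (Submodule.orthogonalProjection U (matE X)) := rfl

def qL (k j : I) : (I → ℂ) →ₗ[ℂ] (I → ℂ) := colvL k ∘ₗ PsiL A ∘ₗ colmL j

omit h1A hmul hstar in
lemma qL_apply (k j : I) (v : I → ℂ) :
    qL A k j v = colvL k (PsiL A (colmL j v)) := rfl

lemma Psi_mul (a : Matrix I I ℂ) (ha : a ∈ A) (X : Matrix I I ℂ) :
    PsiL A (a * X) = a * PsiL A X := by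
  have h := proj_comm A h1A hmul hstar a ha (matE X)
  rw [PsiL_apply, PsiL_apply]
  have e1 : (matE (a * X) : EuclideanSpace ℂ (I × I))
      = matE (a * matE.symm (matE X)) := by rw [matE.symm_apply_apply]
  rw [e1, h, matE.symm_apply_apply]

lemma q_comm (a : Matrix I I ℂ) (ha : a ∈ A) (k j : I) (v : I → ℂ) :
    qL A k j (a.mulVec v) = a.mulVec (qL A k j v) := by
  rw [qL_apply, qL_apply, ← mul_colm, Psi_mul A h1A hmul hstar a ha, colv_mul]

lemma double_commutant (T : Matrix I I ℂ)
    (hT : ∀ X : Matrix I I ℂ, (∀ a ∈ A, X * a = a * X) → X * T = T * X) :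
    T ∈ A := by
  -- the matrix entries of the projection commute with T
  have hq : ∀ (k j : I) (v : I → ℂ),
      qL A k j (T.mulVec v) = T.mulVec (qL A k j v) := by
    intro k j
    have hcomm : ∀ a ∈ A,
        (LinearMap.toMatrix' (qL A k j)) * a = a * LinearMap.toMatrix' (qL A k j) := by
      intro a ha
      have h1 : qL A k j ∘ₗ Matrix.toLin' a = Matrix.toLin' a ∘ₗ qL A k j := by
        apply LinearMap.ext
        intro v
        simp only [LinearMap.comp_apply, Matrix.toLin'_apply]
        exact q_comm A h1A hmul hstar a ha k j v
      have h2 := congrArg LinearMap.toMatrix' h1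
      rwa [LinearMap.toMatrix'_comp, LinearMap.toMatrix'_comp,
        LinearMap.toMatrix'_toLin'] at h2
    have hTq := hT _ hcomm
    intro v
    have h3 := congrArg Matrix.toLin' hTq
    rw [Matrix.toLin'_mul, Matrix.toLin'_mul, Matrix.toLin'_toMatrix'] at h3
    have hv := LinearMap.congr_fun h3 v
    simp only [LinearMap.comp_apply, Matrix.toLin'_apply] at hv
    exact hv
  -- Psi commutes with left multiplication by T
  have hcol : ∀ (Y : Matrix I I ℂ) (k : I),
      colvL k (PsiL A Y) = ∑ j : I, qL A k j (colvL j Y) := by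
    intro Y k
    conv_lhs => rw [← colm_colv Y]
    rw [map_sum, map_sum]
    rfl
  have hPsiT : ∀ X : Matrix I I ℂ, PsiL A (T * X) = T * PsiL A X := by
    intro X
    ext i c
    have key : colvL c (PsiL A (T * X)) = T.mulVec (colvL c (PsiL A X)) := by
      rw [hcol (T * X) c, hcol X c]
      have e : ∀ j : I, qL A c j (colvL j (T * X)) = T.mulVec (qL A c j (colvL j X)) := by
        intro j; rw [colv_mul, hq]
      rw [Finset.sum_congr rfl (fun j _ => e j)]
      exact (map_sum T.mulVecLin _ _).symm
    have l1 : PsiL A (T * X) i c = colvL c (PsiL A (T * X)) i := rfl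
    have r1 : (T * PsiL A X) i c = (T.mulVec (colvL c (PsiL A X))) i := by
      rw [← colv_mul]; rfl
    rw [l1, r1, key]
  -- Psi fixes 1 and lands in A
  have hPsi1 : PsiL A (1 : Matrix I I ℂ) = 1 := by
    have hm : (matE (1 : Matrix I I ℂ) : EuclideanSpace ℂ (I × I)) ∈ U := ⟨1, h1A, rfl⟩
    rw [PsiL_apply, show
      ((Submodule.orthogonalProjection U (matE 1) : EuclideanSpace ℂ (I × I))) = matE 1 from
      Submodule.starProjection_eq_self_iff.2 hm, matE.symm_apply_apply]
  have hmemPsi : ∀ X : Matrix I I ℂ, PsiL A X ∈ A := by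
    intro X
    rcases (Submodule.orthogonalProjection U (matE X)).2 with ⟨m, hm, hmv⟩
    have he : PsiL A X = m := by
      rw [PsiL_apply, ← hmv]
      exact matE.symm_apply_apply m
    rw [he]; exact hm
  have hfin : T = PsiL A T := by
    calc T = T * 1 := (mul_one T).symm
      _ = T * PsiL A 1 := by rw [hPsi1]
      _ = PsiL A (T * 1) := (hPsiT 1).symm
      _ = PsiL A T := by rw [mul_one]
  rw [hfin]
  exact hmemPsi T

end DC

end DCsec

noncomputable section Main

variable {N : ℕ}

lemma symm_of_comm_permOp (X : TensorOps N)
    (hXp : ∀ π : Equiv.Perm (Fin N), X * permOp N π = permOp N π * X)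
    (π : Equiv.Perm (Fin N)) (t s : Fin N → Fin 2) :
    X (t ∘ ⇑π) (s ∘ ⇑π) = X t s := by
  have h1 : (permOp N π * X) t (s ∘ ⇑π) = X (t ∘ ⇑π) (s ∘ ⇑π) := by
    rw [Matrix.mul_apply, Finset.sum_eq_single (t ∘ ⇑π)]
    · rw [permOp_apply, if_pos rfl, one_mul]
    · intro b _ hb
      rw [permOp_apply, if_neg hb, zero_mul]
    · simp
  have h2 : (X * permOp N π) t (s ∘ ⇑π) = X t s := by
    rw [Matrix.mul_apply, Finset.sum_eq_single s]
    · rw [permOp_apply, if_pos rfl, mul_one]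
    · intro b _ hb
      have hc : ¬ (s ∘ ⇑π) = b ∘ ⇑π := by
        intro hh
        apply hb
        funext j
        have h3 := congrFun hh (π⁻¹ j)
        exact (by simpa using h3 : s j = b j).symm
      rw [permOp_apply, if_neg hc, mul_zero]
    · simp
  rw [← h1, ← hXp π, h2]

lemma span_permOp_one : (1 : TensorOps N) ∈ Submodule.span ℂ (Set.range (permOp N)) :=
  Submodule.subset_span ⟨1, permOp_one⟩

lemma span_permOp_mul {a b : TensorOps N}
    (ha : a ∈ Submodule.span ℂ (Set.range (permOp N)))
    (hb : b ∈ Submodule.span ℂ (Set.range (permOp N))) :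
    a * b ∈ Submodule.span ℂ (Set.range (permOp N)) := by
  induction ha using Submodule.span_induction with
  | mem x hx =>
    rcases hx with ⟨π, rfl⟩
    induction hb using Submodule.span_induction with
    | mem y hy =>
      rcases hy with ⟨σ, rfl⟩
      rw [permOp_mul_permOp]
      exact Submodule.subset_span ⟨π * σ, rfl⟩
    | zero => rw [mul_zero]; exact Submodule.zero_mem _
    | add y z _ _ hy hz => rw [mul_add]; exact Submodule.add_mem _ hy hz
    | smul c y _ hy => rw [mul_smul_comm]; exact Submodule.smul_mem _ _ hy
  | zero => rw [zero_mul]; exact Submodule.zero_mem _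
  | add x y _ _ hx hy => rw [add_mul]; exact Submodule.add_mem _ hx hy
  | smul c x _ hx => rw [smul_mul_assoc]; exact Submodule.smul_mem _ _ hx

lemma span_permOp_star {a : TensorOps N}
    (ha : a ∈ Submodule.span ℂ (Set.range (permOp N))) :
    aᴴ ∈ Submodule.span ℂ (Set.range (permOp N)) := by
  induction ha using Submodule.span_induction with
  | mem x hx =>
    rcases hx with ⟨π, rfl⟩
    rw [conjTranspose_permOp]
    exact Submodule.subset_span ⟨π⁻¹, rfl⟩
  | zero => rw [Matrix.conjTranspose_zero]; exact Submodule.zero_mem _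
  | add x y _ _ hx hy => rw [Matrix.conjTranspose_add]; exact Submodule.add_mem _ hx hy
  | smul c x _ hx =>
    rw [Matrix.conjTranspose_smul]
    exact Submodule.smul_mem _ _ hx

/-- Schur–Weyl duality (commutant form, other direction): an endomorphism of `(ℂ²)^{⊗N}`
commutes with `g^{⊗N}` for every `g ∈ GL₂(ℂ)` iff it lies in the ℂ-linear span of the
permutation operators `{P_π : π ∈ S_N}`. -/
theorem schurWeyl_commutant_of_GL (N : ℕ) (hN : 1 ≤ N) (T : TensorOps N) :
    (∀ g : Matrix (Fin 2) (Fin 2) ℂ, IsUnit g → T * kron N g = kron N g * T) ↔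
      T ∈ Submodule.span ℂ (Set.range (permOp N)) := by
  constructor
  · intro h
    have hTk : ∀ g : Matrix (Fin 2) (Fin 2) ℂ, T * kron N g = kron N g * T :=
      commute_kron_of_commute_unit T h
    apply double_commutant (Submodule.span ℂ (Set.range (permOp N)))
      span_permOp_one (fun a b ha hb => span_permOp_mul ha hb)
      (fun a ha => span_permOp_star ha)
    intro X hX
    have hXp : ∀ π : Equiv.Perm (Fin N), X * permOp N π = permOp N π * X :=
      fun π => hX _ (Submodule.subset_span ⟨π, rfl⟩)
    have hXkron : X ∈ Submodule.span ℂ (Set.range (kron N)) :=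
      mem_span_kron_of_symm X (symm_of_comm_permOp X hXp)
    clear hX hXp
    induction hXkron using Submodule.span_induction with
    | mem x hx =>
      rcases hx with ⟨g, rfl⟩
      exact (hTk g).symm
    | zero => rw [zero_mul, mul_zero]
    | add x y _ _ hx hy => rw [add_mul, mul_add, hx, hy]
    | smul c x _ hx => rw [smul_mul_assoc, mul_smul_comm, hx]
  · intro hmem g hg
    induction hmem using Submodule.span_induction with
    | mem x hx =>
      rcases hx with ⟨π, rfl⟩
      exact permOp_mul_kron π g
    | zero => rw [zero_mul, mul_zero]
    | add x y _ _ hx hy => rw [add_mul, mul_add, hx, hy]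
    | smul c x _ hx => rw [smul_mul_assoc, mul_smul_comm, hx]

end Main
end
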